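/- Let β ≥ e and define the Cox occupation probabilities p_η(n) = g^{(n)}(−1)/n!, where g(ζ) = exp(β(e^ζ − 1)). Then for every n ≥ 1, p_η(n) ≥ a·b·B_n/n!, where a = exp(−β(1 − e^{−1})), b = β e^{−1} ≥ 1, and B_n is the n-th Bell number (the number of partitions of an n-element set). -/

import Mathlib

/-- The n-th Bell number B_n: the number of partitions of an n-element set. -/
noncomputable def bellNumber (n : ℕ) : ℕ := Nat.card (Finpartition (Finset.univ : Finset (Fin n)))

open Finset Polynomial

section Combi

variable {α : Type*} [Fintype α] [DecidableEq α]

instance finiteSetoid (β : Type*) [Finite β] : Finite (Setoid β) :=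
  Finite.of_injective (fun s => s.r) (fun s t h => by cases s; cases t; congr)

/-- The setoid associated to a finpartition of `univ`. -/
def finpartToSetoid (P : Finpartition (univ : Finset α)) : Setoid α where
  r a b := P.part a = P.part b
  iseqv := ⟨fun _ => rfl, Eq.symm, Eq.trans⟩

noncomputable def finpartEquivSetoid : Finpartition (univ : Finset α) ≃ Setoid α where
  toFun := finpartToSetoid
  invFun s := @Finpartition.ofSetoid α _ _ s (Classical.decRel _)
  left_inv P := by
    letI : DecidableRel (finpartToSetoid P).r := Classical.decRel _
    set Q := @Finpartition.ofSetoid α _ _ (finpartToSetoid P) (Classical.decRel _) with hQ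
    apply le_antisymm
    · intro t ht
      obtain ⟨x, hx⟩ := Q.nonempty_of_mem_parts ht
      have htq : Q.part x = t := Q.part_eq_of_mem ht hx
      refine ⟨P.part x, P.part_mem.2 (mem_univ x), ?_⟩
      intro y hy
      rw [← htq] at hy
      have hr : (finpartToSetoid P).r x y := by
        rw [← @Finpartition.mem_part_ofSetoid_iff_rel α _ x _ (finpartToSetoid P) _ y]
        exact hy
      have : P.part x = P.part y := hr
      rw [this]
      exact P.mem_part (mem_univ y)
    · intro t ht
      obtain ⟨x, hx⟩ := P.nonempty_of_mem_parts ht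
      have htp : P.part x = t := P.part_eq_of_mem ht hx
      refine ⟨Q.part x, Q.part_mem.2 (mem_univ x), ?_⟩
      intro y hy
      have hr : (finpartToSetoid P).r x y := by
        show P.part x = P.part y
        rw [htp, P.part_eq_of_mem ht hy]
      rw [← @Finpartition.mem_part_ofSetoid_iff_rel α _ x _ (finpartToSetoid P) _ y] at hr
      exact hr
  right_inv s := by
    letI := Classical.decRel s.r
    apply Setoid.ext
    intro a b
    set Q := @Finpartition.ofSetoid α _ _ s (Classical.decRel _) with hQ
    show Q.part a = Q.part b ↔ s.r a b
    constructor
    · intro h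
      have hb : b ∈ Q.part a := by rw [h]; exact Q.mem_part (mem_univ b)
      rwa [Finpartition.mem_part_ofSetoid_iff_rel] at hb
    · intro h
      have hb : b ∈ Q.part a := by rwa [Finpartition.mem_part_ofSetoid_iff_rel]
      rw [Q.mem_part_iff_part_eq_part (mem_univ b) (mem_univ a)] at hb
      exact hb.symm

/-- Transport of setoids along an equivalence. -/
def setoidCongr {α β : Type*} (e : α ≃ β) : Setoid α ≃ Setoid β where
  toFun s := Setoid.comap e.symm s
  invFun s := Setoid.comap e s
  left_inv s := Setoid.ext fun a b => by simp [Setoid.comap_rel]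
  right_inv s := Setoid.ext fun a b => by simp [Setoid.comap_rel]

/-- Extend a setoid on a subset `S` of `α` to a setoid on `Option α` by putting everything
outside `S` into the class of `none`. -/
def extendSetoid (S : Finset α) (r : Setoid {x : α // x ∈ S}) : Setoid (Option α) where
  r x y :=
    match x, y with
    | none, none => True
    | some a, none => a ∉ S
    | none, some b => b ∉ S
    | some a, some b => (∃ (ha : a ∈ S) (hb : b ∈ S), r ⟨a, ha⟩ ⟨b, hb⟩) ∨ (a ∉ S ∧ b ∉ S)
  iseqv := by
    constructor
    · rintro (_ | a)
      · trivial
      · by_cases h : a ∈ S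
        · exact Or.inl ⟨h, h, r.refl _⟩
        · exact Or.inr ⟨h, h⟩
    · rintro (_ | a) (_ | b) h
      · trivial
      · exact h
      · exact h
      · rcases h with ⟨ha, hb, hr⟩ | ⟨ha, hb⟩
        · exact Or.inl ⟨hb, ha, r.symm hr⟩
        · exact Or.inr ⟨hb, ha⟩
    · rintro (_ | a) (_ | b) (_ | c) h1 h2
      · trivial
      · exact h2
      · trivial
      · rcases h2 with ⟨hb, hc, hr⟩ | ⟨hb, hc⟩
        · exact absurd hb h1
        · exact hc
      · exact h1
      · exact Or.inr ⟨h1, h2⟩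
      · rcases h1 with ⟨ha, hb, hr⟩ | ⟨ha, hb⟩
        · exact absurd hb h2
        · exact ha
      · rcases h1 with ⟨ha, hb, hr1⟩ | ⟨ha, hb⟩
        · rcases h2 with ⟨hb', hc, hr2⟩ | ⟨hb', hc⟩
          · exact Or.inl ⟨ha, hc, r.trans hr1 hr2⟩
          · exact absurd hb hb'
        · rcases h2 with ⟨hb', hc, hr2⟩ | ⟨hb', hc⟩
          · exact absurd hb' hb
          · exact Or.inr ⟨ha, hc⟩

/-- The subset of elements of `α` not equivalent to `none`. -/
noncomputable def piProj (s : Setoid (Option α)) : Finset α :=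
  @Finset.filter α (fun x => ¬ s (some x) none) (Classical.decPred _) univ

lemma mem_piProj {s : Setoid (Option α)} {x : α} : x ∈ piProj s ↔ ¬ s (some x) none := by
  simp [piProj, Finset.mem_filter]

lemma piProj_extendSetoid (S : Finset α) (r : Setoid {x : α // x ∈ S}) :
    piProj (extendSetoid S r) = S := by
  ext x
  rw [mem_piProj]
  show ¬ (x ∉ S) ↔ x ∈ S
  exact not_not

noncomputable def fiberEquiv (S : Finset α) :
    {s : Setoid (Option α) // piProj s = S} ≃ Setoid {x : α // x ∈ S} where
  toFun s := Setoid.comap (fun x => some x.1) s.1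
  invFun r := ⟨extendSetoid S r, piProj_extendSetoid S r⟩
  left_inv := by
    rintro ⟨s, hs⟩
    have hmem : ∀ x : α, x ∈ S ↔ ¬ s (some x) none := by
      intro x
      rw [← hs, mem_piProj]
    apply Subtype.ext
    apply Setoid.ext
    rintro (_ | a) (_ | b)
    · show True ↔ s none none
      exact iff_of_true trivial (s.refl none)
    · show b ∉ S ↔ s none (some b)
      rw [hmem, not_not]
      exact ⟨fun h => s.symm h, fun h => s.symm h⟩
    · show a ∉ S ↔ s (some a) none
      rw [hmem, not_not]
    · show (∃ (ha : a ∈ S) (hb : b ∈ S), s (some a) (some b)) ∨ (a ∉ S ∧ b ∉ S) ↔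
        s (some a) (some b)
      constructor
      · rintro (⟨ha, hb, h⟩ | ⟨ha, hb⟩)
        · exact h
        · rw [hmem, not_not] at ha hb
          exact s.trans ha (s.symm hb)
      · intro h
        by_cases ha : a ∈ S
        · have hb : b ∈ S := by
            rw [hmem] at ha ⊢
            intro hbn
            exact ha (s.trans h hbn)
          exact Or.inl ⟨ha, hb, h⟩
        · have hb : b ∉ S := by
            rw [hmem, not_not] at ha ⊢
            exact s.trans (s.symm h) ha
          exact Or.inr ⟨ha, hb⟩
  right_inv := by
    intro r
    apply Setoid.ext
    rintro ⟨a, ha⟩ ⟨b, hb⟩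
    show (∃ (ha' : a ∈ S) (hb' : b ∈ S), r ⟨a, ha'⟩ ⟨b, hb'⟩) ∨ (a ∉ S ∧ b ∉ S) ↔ r ⟨a, ha⟩ ⟨b, hb⟩
    constructor
    · rintro (⟨ha', hb', h⟩ | ⟨ha', hb'⟩)
      · exact h
      · exact absurd ha ha'
    · intro h
      exact Or.inl ⟨ha, hb, h⟩

lemma card_setoid_option :
    Nat.card (Setoid (Option α)) = ∑ S : Finset α, Nat.card (Setoid {x : α // x ∈ S}) := by
  letI : Fintype (Setoid (Option α)) := Fintype.ofFinite _
  rw [Nat.card_congr (Equiv.sigmaFiberEquiv (piProj (α := α))).symm]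
  rw [Nat.card_eq_fintype_card, Fintype.card_sigma]
  refine Finset.sum_congr rfl fun S _ => ?_
  rw [← Nat.card_eq_fintype_card, Nat.card_congr (fiberEquiv S)]

end Combi

theorem bellNumber_eq_card_setoid (n : ℕ) : bellNumber n = Nat.card (Setoid (Fin n)) :=
  Nat.card_congr finpartEquivSetoid

theorem bellNumber_zero : bellNumber 0 = 1 := by
  rw [bellNumber_eq_card_setoid]
  haveI : Unique (Setoid (Fin 0)) :=
    { default := ⊤, uniq := fun s => Setoid.ext fun a => a.elim0 }
  exact Nat.card_unique

theorem bellNumber_succ (n : ℕ) :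
    bellNumber (n + 1) = ∑ k ∈ range (n + 1), n.choose k * bellNumber k := by
  rw [bellNumber_eq_card_setoid,
    Nat.card_congr (setoidCongr (finSuccEquiv n) : Setoid (Fin (n+1)) ≃ Setoid (Option (Fin n))),
    card_setoid_option]
  have h1 : ∀ S : Finset (Fin n),
      Nat.card (Setoid {x : Fin n // x ∈ S}) = bellNumber S.card := by
    intro S
    rw [bellNumber_eq_card_setoid]
    exact Nat.card_congr (setoidCongr ((Fintype.equivFin _).trans (finCongr (Fintype.card_coe S))))
  simp_rw [h1]
  rw [show (Finset.univ : Finset (Finset (Fin n))) = Finset.univ.powerset from (powerset_univ).symm]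
  rw [Finset.sum_powerset_apply_card (fun k => bellNumber k)]
  simp [card_univ]

/-- Touchard polynomials: `T 0 = 1`, `T (n+1) = X * (T n + T n')`. -/
noncomputable def touchard : ℕ → Polynomial ℝ
  | 0 => 1
  | n + 1 => X * (touchard n + derivative (touchard n))

lemma hasDerivAt_g (β z : ℝ) :
    HasDerivAt (fun z : ℝ => Real.exp (β * (Real.exp z - 1)))
      (β * Real.exp z * Real.exp (β * (Real.exp z - 1))) z := by
  have h1 : HasDerivAt (fun z : ℝ => β * (Real.exp z - 1)) (β * Real.exp z) z := by
    simpa using ((Real.hasDerivAt_exp z).sub_const 1).const_mul β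
  have h2 := (Real.hasDerivAt_exp (β * (Real.exp z - 1))).comp z h1
  simpa [mul_comm, Function.comp_def] using h2

lemma iteratedDeriv_g (β : ℝ) (n : ℕ) :
    iteratedDeriv n (fun z : ℝ => Real.exp (β * (Real.exp z - 1)))
      = fun z => Real.exp (β * (Real.exp z - 1)) * (touchard n).eval (β * Real.exp z) := by
  induction n with
  | zero => simp [touchard]
  | succ n ih =>
    rw [iteratedDeriv_succ, ih]
    funext z
    have hinner : HasDerivAt (fun z : ℝ => β * Real.exp z) (β * Real.exp z) z :=
      (Real.hasDerivAt_exp z).const_mul β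
    have hP : HasDerivAt (fun z : ℝ => (touchard n).eval (β * Real.exp z))
        ((derivative (touchard n)).eval (β * Real.exp z) * (β * Real.exp z)) z :=
      by have := ((touchard n).hasDerivAt (β * Real.exp z)).comp z hinner; exact this
    have htot := (hasDerivAt_g β z).mul hP
    rw [show (fun z : ℝ => Real.exp (β * (Real.exp z - 1)) * (touchard n).eval (β * Real.exp z)) = ((fun z : ℝ => Real.exp (β * (Real.exp z - 1))) * fun z => (touchard n).eval (β * Real.exp z)) from rfl, htot.deriv]
    simp only [touchard, eval_mul, eval_X, eval_add]
    ring

/-- Leibniz-type identity for Touchard polynomials. -/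
lemma touchard_add_deriv (n : ℕ) :
    touchard n + derivative (touchard n)
      = ∑ k ∈ range (n + 1), n.choose k • touchard k := by
  induction n with
  | zero => simp [touchard]
  | succ n ih =>
    have hder : derivative (touchard (n + 1))
        = (touchard n + derivative (touchard n))
          + X * derivative (touchard n + derivative (touchard n)) := by
      rw [show touchard (n+1) = X * (touchard n + derivative (touchard n)) from rfl]
      rw [derivative_mul, derivative_X, one_mul]
    have step : touchard (n + 1) + derivative (touchard (n + 1))
        = (touchard n + derivative (touchard n))
          + X * ((touchard n + derivative (touchard n))
              + derivative (touchard n + derivative (touchard n))) := by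
      rw [hder, show touchard (n+1) = X * (touchard n + derivative (touchard n)) from rfl]
      ring
    rw [step, ih]
    have hXsum : X * ((∑ k ∈ range (n + 1), n.choose k • touchard k)
          + derivative (∑ k ∈ range (n + 1), n.choose k • touchard k))
        = ∑ k ∈ range (n + 1), n.choose k • touchard (k + 1) := by
      rw [derivative_sum]
      simp_rw [derivative_smul]
      rw [← Finset.sum_add_distrib, Finset.mul_sum]
      refine Finset.sum_congr rfl fun k _ => ?_
      rw [← smul_add, mul_smul_comm]
      rw [show touchard (k+1) = X * (touchard k + derivative (touchard k)) from rfl]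
    rw [hXsum]
    rw [Finset.sum_range_succ' (fun k => (n+1).choose k • touchard k) (n+1)]
    simp only [Nat.choose_succ_succ, add_smul, Nat.choose_zero_right, one_smul]
    rw [Finset.sum_add_distrib]
    have h2 : ∑ k ∈ range (n + 1), n.choose (k + 1) • touchard (k + 1)
        = ∑ k ∈ range (n + 1), n.choose k • touchard k - n.choose 0 • touchard 0 := by
      rw [Finset.sum_range_succ' (fun k => n.choose k • touchard k) n] at *
      rw [Finset.sum_range_succ]
      simp [Nat.choose_succ_self]
    rw [h2]
    simp [touchard]
    abel

/- STATEMENT 11: Let β ≥ e and define the Cox occupation probabilities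
p_η(n) = g^{(n)}(−1)/n!, where g(ζ) = exp(β(e^ζ − 1)). Then for every n ≥ 1,
p_η(n) ≥ a·b·B_n/n!, where a = exp(−β(1 − e^{−1})), b = β e^{−1} ≥ 1, and B_n is the n-th
Bell number. -/
theorem stmt_11 (β : ℝ) (hβ : Real.exp 1 ≤ β) :
    β * Real.exp (-1) ≥ 1 ∧
    ∀ n : ℕ, 1 ≤ n →
      iteratedDeriv n (fun z : ℝ => Real.exp (β * (Real.exp z - 1))) (-1) / n.factorial
        ≥ Real.exp (-β * (1 - Real.exp (-1))) * (β * Real.exp (-1)) * (bellNumber n : ℝ)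
            / n.factorial := by
  set b : ℝ := β * Real.exp (-1) with hbdef
  have hb : 1 ≤ b := by
    have h := mul_le_mul_of_nonneg_right hβ (Real.exp_pos (-1)).le
    rwa [← Real.exp_add, add_neg_cancel, Real.exp_zero] at h
  have hb0 : 0 ≤ b := le_trans zero_le_one hb
  -- key inequality on Touchard evaluations
  have key : ∀ n : ℕ, (bellNumber n : ℝ) ≤ (touchard n).eval b ∧
      (1 ≤ n → b * (bellNumber n : ℝ) ≤ (touchard n).eval b) := by
    intro n
    induction n using Nat.strong_induction_on with
    | _ n ih =>
      match n with
      | 0 =>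
        constructor
        · simp [touchard, bellNumber_zero]
        · intro h; omega
      | (m + 1) =>
        have hval : (touchard (m+1)).eval b
            = b * ∑ k ∈ range (m+1), (m.choose k : ℝ) * (touchard k).eval b := by
          rw [show touchard (m+1) = X * (touchard m + derivative (touchard m)) from rfl,
            touchard_add_deriv]
          simp [eval_finset_sum, Finset.mul_sum, nsmul_eq_mul]
        have hsum : ∑ k ∈ range (m+1), (m.choose k : ℝ) * (bellNumber k : ℝ)
            ≤ ∑ k ∈ range (m+1), (m.choose k : ℝ) * (touchard k).eval b := by
          refine Finset.sum_le_sum fun k hk => ?_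
          have hk' : k < m + 1 := Finset.mem_range.mp hk
          exact mul_le_mul_of_nonneg_left (ih k hk').1 (Nat.cast_nonneg _)
        have hbell : (bellNumber (m+1) : ℝ)
            = ∑ k ∈ range (m+1), (m.choose k : ℝ) * (bellNumber k : ℝ) := by
          rw [bellNumber_succ m]
          push_cast
          rfl
        have h2 : b * (bellNumber (m+1) : ℝ) ≤ (touchard (m+1)).eval b := by
          rw [hval, hbell]
          exact mul_le_mul_of_nonneg_left hsum hb0
        refine ⟨?_, fun _ => h2⟩
        calc (bellNumber (m+1) : ℝ) ≤ b * (bellNumber (m+1) : ℝ) :=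
              le_mul_of_one_le_left (Nat.cast_nonneg _) hb
          _ ≤ _ := h2
  refine ⟨hb, fun n hn => ?_⟩
  rw [ge_iff_le]
  have hfac : (0 : ℝ) < (n.factorial : ℝ) := by exact_mod_cast n.factorial_pos
  have hval : iteratedDeriv n (fun z : ℝ => Real.exp (β * (Real.exp z - 1))) (-1)
      = Real.exp (β * (Real.exp (-1) - 1)) * (touchard n).eval b := by
    rw [iteratedDeriv_g]
  have ha : Real.exp (-β * (1 - Real.exp (-1))) = Real.exp (β * (Real.exp (-1) - 1)) := by
    ring_nf
  have hmain : Real.exp (-β * (1 - Real.exp (-1))) * (β * Real.exp (-1)) * (bellNumber n : ℝ)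
      ≤ iteratedDeriv n (fun z : ℝ => Real.exp (β * (Real.exp z - 1))) (-1) := by
    rw [hval, ha, mul_assoc]
    exact mul_le_mul_of_nonneg_left ((key n).2 hn) (Real.exp_pos _).le
  gcongr
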